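/- Let R be a ring and M an R-module. For a homomorphism b : X → Y between R-modules, define Hom(Y,M)b = { f ∈ Hom(X,M) : f = φ ∘ b for some φ ∈ Hom(Y,M) }, a subgroup of Hom(X,M). Then for any family (M_i)_{i∈I} of R-modules there are natural isomorphisms Hom(Y, ∏_{i∈I} M_i)b ≅ ∏_{i∈I} Hom(Y, M_i)b and Hom(Y, ⊕_{i∈I} M_i)b ≅ ⊕_{i∈I} Hom(Y, M_i)b, where in the second statement X and Y are assumed finitely presented. -/

import Mathlib

universe u

variable (R : Type u) [Ring R]

/-- The subgroup of finite definition `Hom(Y, M)b` of `Hom(X, M)` associated with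
`b : X → Y`: the set of all `f : X → M` that factor as `f = φ ∘ b` with `φ : Y → M`. -/
def finDefSubgroup {X Y : Type u} [AddCommGroup X] [AddCommGroup Y] [Module R X] [Module R Y]
    (b : X →ₗ[R] Y) (M : Type u) [AddCommGroup M] [Module R M] :
    AddSubgroup (X →ₗ[R] M) where
  carrier := {f | ∃ φ : Y →ₗ[R] M, f = φ.comp b}
  add_mem' := by rintro f g ⟨φ, rfl⟩ ⟨ψ, rfl⟩; exact ⟨φ + ψ, by ext x; simp⟩
  zero_mem' := ⟨0, by ext x; simp⟩
  neg_mem' := by rintro f ⟨φ, rfl⟩; exact ⟨-φ, by ext x; simp⟩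

open DirectSum

section Aux
variable {R : Type u} [Ring R] {X Y : Type u} [AddCommGroup X] [AddCommGroup Y]
  [Module R X] [Module R Y] (b : X →ₗ[R] Y)

variable {I : Type u} [DecidableEq I] (M : I → Type u) [∀ i, AddCommGroup (M i)] [∀ i, Module R (M i)]

def finDefLof (i : I) : finDefSubgroup R b (M i) →+ finDefSubgroup R b (⨁ i, M i) where
  toFun g := ⟨(DirectSum.lof R I M i).comp (g : X →ₗ[R] M i), by
    obtain ⟨φ, hφ⟩ := g.2
    exact ⟨(DirectSum.lof R I M i).comp φ, by rw [hφ, LinearMap.comp_assoc]⟩⟩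
  map_zero' := Subtype.ext (by ext x; simp)
  map_add' g h := Subtype.ext (by ext x; simp)

noncomputable def finDefPsi : (⨁ i, finDefSubgroup R b (M i)) →+ finDefSubgroup R b (⨁ i, M i) :=
  DirectSum.toAddMonoid (finDefLof b M)

theorem finDefPsi_component (g : ⨁ i, finDefSubgroup R b (M i)) (i : I) :
    (DirectSum.component R I M i).comp ((finDefPsi b M g : finDefSubgroup R b (⨁ i, M i)) : X →ₗ[R] ⨁ i, M i)
      = (g i : X →ₗ[R] M i) := by
  induction g using DirectSum.induction_on with
  | zero => simp [finDefPsi]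
  | of j x =>
      rw [finDefPsi, DirectSum.toAddMonoid_of]
      by_cases h : j = i
      · subst h
        ext y
        simp [finDefLof, DirectSum.of_eq_same]
      · ext y
        simp [finDefLof, DirectSum.of_eq_of_ne _ _ _ h, DirectSum.component.of]
        rw [dif_neg h, DirectSum.of_apply, dif_neg h]
        rfl
  | add g₁ g₂ h₁ h₂ =>
      rw [map_add]
      ext y
      simp only [DirectSum.add_apply, AddSubgroup.coe_add, LinearMap.add_apply,
        LinearMap.comp_apply] at *
      rw [← h₁, ← h₂]
      simp

end Aux

section Aux2
variable {R : Type u} [Ring R] {X Y : Type u} [AddCommGroup X] [AddCommGroup Y]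
  [Module R X] [Module R Y] (b : X →ₗ[R] Y)
  {I : Type u} [DecidableEq I] (M : I → Type u) [∀ i, AddCommGroup (M i)] [∀ i, Module R (M i)]

theorem finDefPsi_injective : Function.Injective (finDefPsi b M) := by
  intro g₁ g₂ h
  refine DFinsupp.ext fun i => Subtype.ext ?_
  rw [← finDefPsi_component b M g₁ i, ← finDefPsi_component b M g₂ i, h]

theorem finDefPsi_surjective (hX : Module.Finite R X) :
    Function.Surjective (finDefPsi b M) := by
  classical
  rintro ⟨f, φ, rfl⟩
  obtain ⟨s, hs⟩ := Module.finite_def.mp hX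
  set f : X →ₗ[R] ⨁ i, M i := φ.comp b with hf
  set T : Finset I := s.biUnion (fun x => (f x).support) with hT
  have key : ∀ i ∉ T, (DirectSum.component R I M i).comp f = 0 := by
    intro i hi
    apply LinearMap.ext_on hs
    intro x hx
    have : i ∉ (f x).support := fun h => hi (Finset.mem_biUnion.2 ⟨x, hx, h⟩)
    simp only [LinearMap.comp_apply, LinearMap.zero_apply]
    exact DFinsupp.notMem_support_iff.1 this
  set g : ⨁ i, finDefSubgroup R b (M i) :=
    DFinsupp.mk T (fun j => ⟨(DirectSum.component R I M j).comp f,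
      (DirectSum.component R I M j).comp φ, by rw [hf, LinearMap.comp_assoc]⟩) with hg
  refine ⟨g, Subtype.ext (LinearMap.ext fun x => DFinsupp.ext fun i => ?_)⟩
  have h1 := finDefPsi_component b M g i
  have h2 : ((finDefPsi b M g : finDefSubgroup R b (⨁ i, M i)) : X →ₗ[R] ⨁ i, M i) x i
      = ((g i : X →ₗ[R] M i)) x := DFunLike.congr_fun h1 x
  rw [h2, hg]
  by_cases hi : i ∈ T
  · rw [DFinsupp.mk_apply, dif_pos hi]
    rfl
  · rw [DFinsupp.mk_apply, dif_neg hi]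
    have h3 := DFunLike.congr_fun (key i hi) x
    simp only [LinearMap.comp_apply, LinearMap.zero_apply] at h3
    have h4 : (f x) i = 0 := h3
    simpa [hf] using h4.symm

end Aux2

noncomputable def finDefPiEquiv {R : Type u} [Ring R] {X Y : Type u} [AddCommGroup X]
    [AddCommGroup Y] [Module R X] [Module R Y] (b : X →ₗ[R] Y)
    {I : Type u} (M : I → Type u) [∀ i, AddCommGroup (M i)] [∀ i, Module R (M i)] :
    finDefSubgroup R b (∀ i, M i) ≃+ ∀ i, finDefSubgroup R b (M i) where
  toFun f i := ⟨(LinearMap.proj i).comp (f : X →ₗ[R] ∀ i, M i), by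
    obtain ⟨φ, hφ⟩ := f.2
    exact ⟨(LinearMap.proj i).comp φ, by rw [hφ, LinearMap.comp_assoc]⟩⟩
  invFun g := ⟨LinearMap.pi fun i => (g i : X →ₗ[R] M i), by
    choose φ hφ using fun i => (g i).2
    refine ⟨LinearMap.pi φ, ?_⟩
    ext x i
    simp [hφ i]⟩
  left_inv f := Subtype.ext (by ext x; rfl)
  right_inv g := funext fun i => Subtype.ext (by ext x; rfl)
  map_add' f g := funext fun i => Subtype.ext (by ext x; simp)

/-- Subgroups of finite definition commute with direct products and (for `X`, `Y` finitely
presented) with direct sums: the canonical isomorphisms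
`Hom(X, ∏ᵢ Mᵢ) ≅ ∏ᵢ Hom(X, Mᵢ)` and `Hom(X, ⨁ᵢ Mᵢ) ≅ ⨁ᵢ Hom(X, Mᵢ)` restrict to natural
isomorphisms `Hom(Y, ∏ᵢ Mᵢ)b ≅ ∏ᵢ Hom(Y, Mᵢ)b` and `Hom(Y, ⨁ᵢ Mᵢ)b ≅ ⨁ᵢ Hom(Y, Mᵢ)b`. -/
theorem finDefSubgroup_prod_and_directSum {X Y : Type u} [AddCommGroup X] [AddCommGroup Y]
    [Module R X] [Module R Y] (b : X →ₗ[R] Y)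
    {I : Type u} (M : I → Type u) [∀ i, AddCommGroup (M i)] [∀ i, Module R (M i)] :
    (∃ e : finDefSubgroup R b (∀ i, M i) ≃+ ∀ i, finDefSubgroup R b (M i),
      ∀ (f : finDefSubgroup R b (∀ i, M i)) (i : I),
        (e f i : X →ₗ[R] M i) = (LinearMap.proj i).comp (f : X →ₗ[R] ∀ i, M i)) ∧
    (Module.FinitePresentation R X → Module.FinitePresentation R Y →
      ∃ e : finDefSubgroup R b (DirectSum I M) ≃+ DirectSum I fun i => finDefSubgroup R b (M i),
        ∀ (f : finDefSubgroup R b (DirectSum I M)) (i : I),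
          (e f i : X →ₗ[R] M i) =
            (DirectSum.component R I M i).comp (f : X →ₗ[R] DirectSum I M)) := by
  classical
  constructor
  · exact ⟨finDefPiEquiv b M, fun f i => rfl⟩
  · intro hX _
    have hXf : Module.Finite R X := by haveI := hX; infer_instance
    have hbij : Function.Bijective (finDefPsi b M) :=
      ⟨finDefPsi_injective b M, finDefPsi_surjective b M hXf⟩
    refine ⟨(AddEquiv.ofBijective (finDefPsi b M) hbij).symm, fun f i => ?_⟩
    have h : finDefPsi b M ((AddEquiv.ofBijective (finDefPsi b M) hbij).symm f) = f :=
      (AddEquiv.ofBijective (finDefPsi b M) hbij).apply_symm_apply f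
    rw [← finDefPsi_component b M ((AddEquiv.ofBijective (finDefPsi b M) hbij).symm f) i, h]
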